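/- Let Q be real symmetric block-partitioned with λ_min(Q[i][i]) > Σ_{j≠i}‖Q[i][j]‖_2 =: condition defining δ_i(Q) = λ_min(Q[i][i]) - Σ_{j≠i}‖Q[i][j]‖_2 > 0 for all i, and let A be block-diagonal with A[i][i] = α_i I, α_i > 0. If α_i ≤ (√ε/(1-√ε)) δ_i(Q) for all i ∈ [N], where ε ∈ (0,1), then every eigenvalue of A⁻¹Q is at least (1-√ε)/√ε. -/

import Mathlib

open Matrix BigOperators Finset

noncomputable def specNorm {𝕜 : Type*} [RCLike 𝕜] {m n : Type*} [Fintype m] [Fintype n]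
    [DecidableEq m] [DecidableEq n] (A : Matrix m n 𝕜) : ℝ :=
  ‖LinearMap.toContinuousLinearMap (Matrix.toEuclideanLin A)‖

noncomputable def minEig {n : Type*} [Fintype n] [DecidableEq n] (A : Matrix n n ℝ) : ℝ :=
  sInf {μ : ℝ | (A - μ • 1).det = 0}

noncomputable def maxEig {n : Type*} [Fintype n] [DecidableEq n] (A : Matrix n n ℝ) : ℝ :=
  sSup {μ : ℝ | (A - μ • 1).det = 0}

def blk {N : ℕ} {d : Fin N → ℕ}
    (B : Matrix ((i : Fin N) × Fin (d i)) ((i : Fin N) × Fin (d i)) ℝ) (i j : Fin N) :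
    Matrix (Fin (d i)) (Fin (d j)) ℝ := fun a b => B ⟨i, a⟩ ⟨j, b⟩

noncomputable def eNorm {k : ℕ} (v : Fin k → ℝ) : ℝ := Real.sqrt (∑ a, v a ^ 2)

noncomputable def blockVecNorm {N : ℕ} {d : Fin N → ℕ}
    (x : ((i : Fin N) × Fin (d i)) → ℝ) : ℝ :=
  ⨆ i, eNorm (fun a => x ⟨i, a⟩)

noncomputable def blockOpNorm {N : ℕ} {d : Fin N → ℕ}
    (B : Matrix ((i : Fin N) × Fin (d i)) ((i : Fin N) × Fin (d i)) ℝ) : ℝ :=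
  sInf {c | 0 ≤ c ∧ ∀ x, blockVecNorm (B.mulVec x) ≤ c * blockVecNorm x}

open scoped Matrix.Norms.L2Operator

section helpers
variable {m n : Type*} [Fintype m] [Fintype n] [DecidableEq m] [DecidableEq n]

lemma specNorm_eq_l2 (A : Matrix m n ℝ) : specNorm A = ‖A‖ := rfl

lemma specNorm_nonneg (A : Matrix m n ℝ) : 0 ≤ specNorm A := by
  rw [specNorm_eq_l2]; exact norm_nonneg _

lemma specNorm_transpose (A : Matrix m n ℝ) : specNorm Aᵀ = specNorm A := by
  rw [specNorm_eq_l2, specNorm_eq_l2, ← Matrix.l2_opNorm_conjTranspose A,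
    Matrix.conjTranspose_eq_transpose_of_trivial]

lemma abs_dot_mulVec_le (A : Matrix m n ℝ) (x : m → ℝ) (y : n → ℝ) :
    |x ⬝ᵥ A *ᵥ y| ≤ specNorm A * (Real.sqrt (∑ a, x a ^ 2) * Real.sqrt (∑ b, y b ^ 2)) := by
  classical
  set x' : EuclideanSpace ℝ m := (EuclideanSpace.equiv m ℝ).symm x with hx'
  set y' : EuclideanSpace ℝ n := (EuclideanSpace.equiv n ℝ).symm y with hy'
  have h1 : x ⬝ᵥ A *ᵥ y = inner ℝ x' ((EuclideanSpace.equiv m ℝ).symm (A *ᵥ y)) := by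
    simp [PiLp.inner_apply, dotProduct, RCLike.inner_apply, x', mul_comm]
  have h2 : |inner ℝ x' ((EuclideanSpace.equiv m ℝ).symm (A *ᵥ y))|
      ≤ ‖x'‖ * ‖(EuclideanSpace.equiv m ℝ).symm (A *ᵥ y)‖ := abs_real_inner_le_norm _ _
  have h3 : ‖(EuclideanSpace.equiv m ℝ).symm (A *ᵥ y)‖ ≤ ‖A‖ * ‖y'‖ := by
    simpa [y'] using A.l2_opNorm_mulVec y'
  have hxn : ‖x'‖ = Real.sqrt (∑ a, x a ^ 2) := by
    rw [EuclideanSpace.norm_eq]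
    congr 1; apply Finset.sum_congr rfl; intro a _; rw [Real.norm_eq_abs, sq_abs]; rfl
  have hyn : ‖y'‖ = Real.sqrt (∑ b, y b ^ 2) := by
    rw [EuclideanSpace.norm_eq]
    congr 1; apply Finset.sum_congr rfl; intro a _; rw [Real.norm_eq_abs, sq_abs]; rfl
  calc |x ⬝ᵥ A *ᵥ y| ≤ ‖x'‖ * ‖(EuclideanSpace.equiv m ℝ).symm (A *ᵥ y)‖ := by rw [h1]; exact h2
    _ ≤ ‖x'‖ * (‖A‖ * ‖y'‖) := mul_le_mul_of_nonneg_left h3 (norm_nonneg _)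
    _ = specNorm A * (Real.sqrt (∑ a, x a ^ 2) * Real.sqrt (∑ b, y b ^ 2)) := by
        rw [specNorm_eq_l2, hxn, hyn]; ring
end helpers

section eig
variable {k : ℕ}

lemma det_sub_smul_one_eq {M : Matrix (Fin k) (Fin k) ℝ} (hM : M.IsHermitian) (μ : ℝ) :
    (M - μ • 1).det = ∏ j, (hM.eigenvalues j - μ) := by
  classical
  set U : Matrix (Fin k) (Fin k) ℝ := (hM.eigenvectorUnitary : Matrix (Fin k) (Fin k) ℝ) with hU
  have hUU : U * star U = 1 := (Matrix.mem_unitaryGroup_iff).mp hM.eigenvectorUnitary.2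
  have key : M - μ • 1 = U * (Matrix.diagonal (fun j => hM.eigenvalues j - μ)) * star U := by
    have hs := hM.spectral_theorem
    rw [RCLike.ofReal_real_eq_id] at hs
    replace hs : M = U * Matrix.diagonal (id ∘ hM.eigenvalues) * star U := hs
    have hd : Matrix.diagonal (fun j => hM.eigenvalues j - μ)
        = Matrix.diagonal (id ∘ hM.eigenvalues) - μ • 1 := by
      ext a b
      by_cases h : a = b <;> simp [Matrix.diagonal_apply, Matrix.one_apply, h]
    rw [hd, Matrix.mul_sub, Matrix.sub_mul, ← hs]
    congr 1
    rw [Matrix.mul_smul, Matrix.smul_mul, Matrix.mul_one, hUU]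
  rw [key, Matrix.det_mul, Matrix.det_mul, mul_comm (U.det * _), ← mul_assoc, mul_comm _ U.det,
    ← Matrix.det_mul, hUU, Matrix.det_one, one_mul, Matrix.det_diagonal]

lemma minEig_le {M : Matrix (Fin k) (Fin k) ℝ} (hM : M.IsHermitian) (j : Fin k) :
    minEig M ≤ hM.eigenvalues j := by
  have hbdd : BddBelow {μ : ℝ | (M - μ • 1).det = 0} := by
    have hsub : {μ : ℝ | (M - μ • 1).det = 0} ⊆ Set.range hM.eigenvalues := by
      intro μ hμ
      rw [Set.mem_setOf_eq, det_sub_smul_one_eq hM] at hμ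
      obtain ⟨j, _, hj⟩ := Finset.prod_eq_zero_iff.mp hμ
      exact ⟨j, by linarith [sub_eq_zero.mp hj]⟩
    exact ((Set.finite_range _).subset hsub).bddBelow
  have hmem : hM.eigenvalues j ∈ {μ : ℝ | (M - μ • 1).det = 0} := by
    rw [Set.mem_setOf_eq, det_sub_smul_one_eq hM]
    exact Finset.prod_eq_zero (Finset.mem_univ j) (sub_self _)
  exact csInf_le hbdd hmem

lemma minEig_quad {M : Matrix (Fin k) (Fin k) ℝ} (hM : M.IsHermitian) (x : Fin k → ℝ) :
    minEig M * (∑ a, x a ^ 2) ≤ x ⬝ᵥ M *ᵥ x := by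
  classical
  set U : Matrix (Fin k) (Fin k) ℝ := (hM.eigenvectorUnitary : Matrix (Fin k) (Fin k) ℝ) with hU
  have hUU : U * star U = 1 := (Matrix.mem_unitaryGroup_iff).mp hM.eigenvectorUnitary.2
  have hstar : star U = Uᵀ := by
    rw [Matrix.star_eq_conjTranspose, Matrix.conjTranspose_eq_transpose_of_trivial]
  set y : Fin k → ℝ := Uᵀ *ᵥ x with hy
  have hyU : x ᵥ* U = y := by rw [hy, Matrix.mulVec_transpose]
  have hs := hM.spectral_theorem
  rw [RCLike.ofReal_real_eq_id] at hs; replace hs : M = U * Matrix.diagonal (id ∘ hM.eigenvalues) * star U := hs; rw [hstar] at hs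
  have h1 : x ⬝ᵥ M *ᵥ x = ∑ j, hM.eigenvalues j * (y j) ^ 2 := by
    calc x ⬝ᵥ M *ᵥ x = x ⬝ᵥ (U * (Matrix.diagonal (id ∘ hM.eigenvalues)) * Uᵀ) *ᵥ x := by
          rw [← hs]
      _ = (x ᵥ* U) ⬝ᵥ (Matrix.diagonal (id ∘ hM.eigenvalues)) *ᵥ (Uᵀ *ᵥ x) := by
          rw [← Matrix.mulVec_mulVec, ← Matrix.mulVec_mulVec, Matrix.dotProduct_mulVec]
      _ = ∑ j, hM.eigenvalues j * (y j) ^ 2 := by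
          rw [hyU, ← hy]
          simp only [Matrix.mulVec_diagonal, dotProduct, Function.comp_apply, id_eq]
          apply Finset.sum_congr rfl
          intro j _
          ring
  have h2 : (∑ a, x a ^ 2) = ∑ j, (y j) ^ 2 := by
    have hyy : y ⬝ᵥ y = x ⬝ᵥ x := by
      rw [hy, Matrix.dotProduct_mulVec, Matrix.vecMul_transpose, Matrix.mulVec_mulVec,
        ← hstar, hUU, Matrix.one_mulVec]
    have e1 : x ⬝ᵥ x = ∑ a, x a ^ 2 := by simp [dotProduct, sq]
    have e2 : y ⬝ᵥ y = ∑ j, (y j) ^ 2 := by simp [dotProduct, sq]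
    rw [← e1, ← hyy, e2]
  rw [h1, h2, Finset.mul_sum]
  exact Finset.sum_le_sum fun j _ => mul_le_mul_of_nonneg_right (minEig_le hM j) (sq_nonneg _)
end eig

section blocks
variable {N : ℕ} {d : Fin N → ℕ}

def subv (x : ((i : Fin N) × Fin (d i)) → ℝ) (i : Fin N) : Fin (d i) → ℝ := fun a => x ⟨i, a⟩

lemma sum_sigma_expand (f : ((i : Fin N) × Fin (d i)) → ℝ) :
    ∑ p, f p = ∑ i, ∑ a, f ⟨i, a⟩ := by
  rw [← Finset.univ_sigma_univ, Finset.sum_sigma]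

lemma dot_block (B : Matrix ((i : Fin N) × Fin (d i)) ((i : Fin N) × Fin (d i)) ℝ)
    (x : ((i : Fin N) × Fin (d i)) → ℝ) :
    x ⬝ᵥ B *ᵥ x = ∑ i, ∑ j, (subv x i) ⬝ᵥ (blk B i j) *ᵥ (subv x j) := by
  rw [dotProduct, sum_sigma_expand]
  apply Finset.sum_congr rfl
  intro i _
  have hmv : ∀ a : Fin (d i), (B *ᵥ x) ⟨i, a⟩ = ∑ j, ∑ b, B ⟨i, a⟩ ⟨j, b⟩ * x ⟨j, b⟩ := by
    intro a
    rw [Matrix.mulVec, dotProduct, sum_sigma_expand]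
  simp only [hmv, Finset.mul_sum]
  rw [Finset.sum_comm]
  apply Finset.sum_congr rfl
  intro j _
  simp only [dotProduct, Matrix.mulVec, blk, subv, Finset.mul_sum]

lemma blk_transpose (B : Matrix ((i : Fin N) × Fin (d i)) ((i : Fin N) × Fin (d i)) ℝ)
    (hB : B.IsSymm) (i j : Fin N) : blk B j i = (blk B i j)ᵀ := by
  ext a b
  simp only [blk, Matrix.transpose_apply]
  nth_rewrite 1 [← hB]
  rfl

lemma blk_isHermitian (B : Matrix ((i : Fin N) × Fin (d i)) ((i : Fin N) × Fin (d i)) ℝ)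
    (hB : B.IsSymm) (i : Fin N) : (blk B i i).IsHermitian := by
  rw [Matrix.IsHermitian, Matrix.conjTranspose_eq_transpose_of_trivial]
  exact (blk_transpose B hB i i).symm

lemma blk_diag_same (f : Fin N → ℝ) (i : Fin N) :
    blk (Matrix.diagonal (fun a : (i : Fin N) × Fin (d i) => f a.1)) i i
      = f i • (1 : Matrix (Fin (d i)) (Fin (d i)) ℝ) := by
  ext a b
  by_cases h : a = b
  · subst h; simp [blk, Matrix.diagonal_apply, Matrix.one_apply]
  · have : (⟨i, a⟩ : (i : Fin N) × Fin (d i)) ≠ ⟨i, b⟩ := by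
      simp [Sigma.mk.inj_iff, h]
    simp [blk, Matrix.diagonal_apply, Matrix.one_apply, h, this]

lemma blk_diag_ne (f : Fin N → ℝ) {i j : Fin N} (h : i ≠ j) :
    blk (Matrix.diagonal (fun a : (i : Fin N) × Fin (d i) => f a.1)) i j = 0 := by
  ext a b
  have : (⟨i, a⟩ : (i : Fin N) × Fin (d i)) ≠ ⟨j, b⟩ := by
    simp [Sigma.mk.inj_iff, h]
  simp [blk, Matrix.diagonal_apply, this]

lemma blk_sub (B C : Matrix ((i : Fin N) × Fin (d i)) ((i : Fin N) × Fin (d i)) ℝ) (i j : Fin N) :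
    blk (B - C) i j = blk B i j - blk C i j := rfl

lemma blk_smul (c : ℝ) (B : Matrix ((i : Fin N) × Fin (d i)) ((i : Fin N) × Fin (d i)) ℝ)
    (i j : Fin N) : blk (c • B) i j = c • blk B i j := rfl

end blocks

theorem reg_eigenvalue_condition {N : ℕ} {d : Fin N → ℕ}
    (Q : Matrix ((i : Fin N) × Fin (d i)) ((i : Fin N) × Fin (d i)) ℝ)
    (hQ : Q.IsSymm)
    (δ : Fin N → ℝ)
    (hδ : ∀ i, δ i = minEig (blk Q i i) - ∑ j ∈ Finset.univ.erase i, specNorm (blk Q i j))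
    (hδpos : ∀ i, 0 < δ i)
    (α : Fin N → ℝ) (hα : ∀ i, 0 < α i)
    (ε : ℝ) (hε : ε ∈ Set.Ioo (0 : ℝ) 1)
    (hαle : ∀ i, α i ≤ Real.sqrt ε / (1 - Real.sqrt ε) * δ i) :
    ∀ μ : ℝ, ((Matrix.diagonal (fun a : (i : Fin N) × Fin (d i) => α a.1))⁻¹ * Q
        - μ • 1).det = 0 →
      (1 - Real.sqrt ε) / Real.sqrt ε ≤ μ := by
  obtain ⟨hε0, hε1⟩ := hε
  have hs0 : 0 < Real.sqrt ε := Real.sqrt_pos.mpr hε0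
  have hs1 : Real.sqrt ε < 1 := by
    have h := Real.sqrt_lt_sqrt hε0.le hε1
    simpa using h
  intro μ hdet
  by_contra hlt
  push_neg at hlt
  set c : ℝ := (1 - Real.sqrt ε) / Real.sqrt ε with hc
  have hc0 : 0 < c := div_pos (by linarith) hs0
  have hμδ : ∀ i, μ * α i < δ i := by
    intro i
    rcases le_or_gt μ 0 with h | h
    · have : μ * α i ≤ 0 := mul_nonpos_of_nonpos_of_nonneg h (hα i).le
      linarith [hδpos i]
    · have h1 : μ * α i < c * α i := mul_lt_mul_of_pos_right hlt (hα i)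
      have h2 : c * α i ≤ c * (Real.sqrt ε / (1 - Real.sqrt ε) * δ i) :=
        mul_le_mul_of_nonneg_left (hαle i) hc0.le
      have h3 : c * (Real.sqrt ε / (1 - Real.sqrt ε) * δ i) = δ i := by
        have hne1 : (1 : ℝ) - Real.sqrt ε ≠ 0 := by linarith
        rw [hc]
        field_simp
      linarith
  set A : Matrix ((i : Fin N) × Fin (d i)) ((i : Fin N) × Fin (d i)) ℝ :=
    Matrix.diagonal (fun a : (i : Fin N) × Fin (d i) => α a.1) with hA
  set M : Matrix ((i : Fin N) × Fin (d i)) ((i : Fin N) × Fin (d i)) ℝ := Q - μ • A with hM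
  have hdetA : A.det ≠ 0 := by
    rw [hA, Matrix.det_diagonal]
    exact Finset.prod_ne_zero_iff.mpr fun p _ => (hα p.1).ne'
  have hdetM : M.det = 0 := by
    have hAinv : A⁻¹ * A = 1 := Matrix.nonsing_inv_mul A (isUnit_iff_ne_zero.mpr hdetA)
    have hfact : A⁻¹ * Q - μ • (1 : Matrix ((i : Fin N) × Fin (d i)) ((i : Fin N) × Fin (d i)) ℝ)
        = A⁻¹ * M := by
      rw [hM, Matrix.mul_sub, Matrix.mul_smul, hAinv]
    rw [hfact, Matrix.det_mul] at hdet
    have hAi : A⁻¹.det ≠ 0 := by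
      rw [Matrix.det_nonsing_inv, Ring.inverse_eq_inv']
      exact inv_ne_zero hdetA
    exact (mul_eq_zero.mp hdet).resolve_left hAi
  obtain ⟨v, hv0, hv⟩ := Matrix.exists_mulVec_eq_zero_iff.mpr hdetM
  -- notation
  set s : Fin N → ℝ := fun i => ∑ a, (subv v i) a ^ 2 with hsdef
  set nQ : Fin N → Fin N → ℝ := fun i j => specNorm (blk Q i j) with hnQ
  have hsnn : ∀ i, 0 ≤ s i := fun i => Finset.sum_nonneg fun a _ => sq_nonneg _
  -- diagonal blocks
  have hblkM_diag : ∀ i, blk M i i = blk Q i i - (μ * α i) • 1 := by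
    intro i
    rw [hM, blk_sub, blk_smul, hA, blk_diag_same, smul_smul]
  have hblkM_ne : ∀ i j, i ≠ j → blk M i j = blk Q i j := by
    intro i j h
    rw [hM, blk_sub, blk_smul, hA, blk_diag_ne _ h, smul_zero, sub_zero]
  have hTii : ∀ i, (minEig (blk Q i i) - μ * α i) * s i
      ≤ subv v i ⬝ᵥ (blk M i i) *ᵥ subv v i := by
    intro i
    rw [hblkM_diag i, Matrix.sub_mulVec, dotProduct_sub, Matrix.smul_mulVec,
      Matrix.one_mulVec, dotProduct_smul, smul_eq_mul]
    have hvv : subv v i ⬝ᵥ subv v i = s i := by simp [dotProduct, sq, hsdef]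
    rw [hvv, sub_mul]
    have := minEig_quad (blk_isHermitian Q hQ i) (subv v i)
    have hs' : (∑ a, (subv v i) a ^ 2) = s i := rfl
    rw [hs'] at this
    linarith
  have hTij : ∀ i j, i ≠ j → -(nQ i j * (s i + s j) / 2)
      ≤ subv v i ⬝ᵥ (blk M i j) *ᵥ subv v j := by
    intro i j h
    rw [hblkM_ne i j h]
    have habs := abs_dot_mulVec_le (blk Q i j) (subv v i) (subv v j)
    have hsq : Real.sqrt (∑ a, (subv v i) a ^ 2) * Real.sqrt (∑ b, (subv v j) b ^ 2)
        ≤ (s i + s j) / 2 := by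
      have h1 : Real.sqrt (s i) ^ 2 = s i := Real.sq_sqrt (hsnn i)
      have h2 : Real.sqrt (s j) ^ 2 = s j := Real.sq_sqrt (hsnn j)
      have h3 := two_mul_le_add_sq (Real.sqrt (s i)) (Real.sqrt (s j))
      have hsi : (∑ a, (subv v i) a ^ 2) = s i := rfl
      have hsj : (∑ b, (subv v j) b ^ 2) = s j := rfl
      rw [hsi, hsj]
      nlinarith
    have hbound : |subv v i ⬝ᵥ (blk Q i j) *ᵥ subv v j| ≤ nQ i j * ((s i + s j) / 2) := by
      calc |subv v i ⬝ᵥ (blk Q i j) *ᵥ subv v j|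
          ≤ specNorm (blk Q i j) * (Real.sqrt (∑ a, (subv v i) a ^ 2)
            * Real.sqrt (∑ b, (subv v j) b ^ 2)) := habs
        _ ≤ nQ i j * ((s i + s j) / 2) :=
            mul_le_mul_of_nonneg_left hsq (specNorm_nonneg _)
    have := neg_abs_le (subv v i ⬝ᵥ (blk Q i j) *ᵥ subv v j)
    have : -(nQ i j * ((s i + s j) / 2)) ≤ subv v i ⬝ᵥ (blk Q i j) *ᵥ subv v j := by linarith
    linarith [this]
  -- swap lemma
  set W : Fin N → ℝ := fun i => ∑ j ∈ Finset.univ.erase i, nQ i j with hW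
  set R : Fin N → ℝ := fun i => ∑ j ∈ Finset.univ.erase i, nQ i j * s j with hR
  have hnQsymm : ∀ i j, nQ j i = nQ i j := by
    intro i j
    rw [hnQ]
    show specNorm (blk Q j i) = specNorm (blk Q i j)
    rw [blk_transpose Q hQ i j, specNorm_transpose]
  have hswap : ∑ i, R i = ∑ i, W i * s i := by
    rw [hR, hW]
    have hcomm : ∑ i, ∑ j ∈ Finset.univ.erase i, nQ i j * s j
        = ∑ j, ∑ i ∈ Finset.univ.erase j, nQ i j * s j := by
      apply Finset.sum_comm'
      intro x y
      simp [Finset.mem_erase, ne_comm, and_comm]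
    simp only
    rw [hcomm]
    apply Finset.sum_congr rfl
    intro j _
    rw [Finset.sum_mul]
    apply Finset.sum_congr rfl
    intro i hi
    rw [hnQsymm j i]
  -- assemble
  have hmain : ∑ i, ((minEig (blk Q i i) - μ * α i) * s i - (W i * s i + R i) / 2)
      ≤ v ⬝ᵥ M *ᵥ v := by
    rw [dot_block]
    apply Finset.sum_le_sum
    intro i _
    rw [← Finset.add_sum_erase Finset.univ _ (Finset.mem_univ i)]
    have hrest : -( (W i * s i + R i) / 2)
        ≤ ∑ j ∈ Finset.univ.erase i, subv v i ⬝ᵥ (blk M i j) *ᵥ subv v j := by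
      have hstep : ∑ j ∈ Finset.univ.erase i, (-(nQ i j * (s i + s j) / 2))
          ≤ ∑ j ∈ Finset.univ.erase i, subv v i ⬝ᵥ (blk M i j) *ᵥ subv v j := by
        apply Finset.sum_le_sum
        intro j hj
        exact hTij i j (Finset.ne_of_mem_erase hj).symm
      have heq : ∑ j ∈ Finset.univ.erase i, (nQ i j * (s i + s j) / 2)
          = (W i * s i + R i) / 2 := by
        rw [hW, hR]
        simp only
        rw [← Finset.sum_div]
        congr 1
        rw [Finset.sum_mul, ← Finset.sum_add_distrib]
        apply Finset.sum_congr rfl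
        intro j _
        ring
      have hneg : ∑ j ∈ Finset.univ.erase i, (-(nQ i j * (s i + s j) / 2))
          = -((W i * s i + R i) / 2) := by
        rw [Finset.sum_neg_distrib, heq]
      rw [← hneg]
      exact hstep
    have := hTii i
    linarith
  have hfinal : ∑ i, ((minEig (blk Q i i) - μ * α i) * s i - (W i * s i + R i) / 2)
      = ∑ i, (δ i - μ * α i) * s i := by
    rw [Finset.sum_sub_distrib]
    rw [show (∑ i, (W i * s i + R i) / 2) = ((∑ i, W i * s i) + ∑ i, R i) / 2 by
      rw [← Finset.sum_div, Finset.sum_add_distrib]]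
    rw [hswap, add_self_div_two, ← Finset.sum_sub_distrib]
    apply Finset.sum_congr rfl
    intro i _
    rw [hδ i]
    have hWi : W i = ∑ j ∈ Finset.univ.erase i, specNorm (blk Q i j) := rfl
    rw [← hWi]
    ring
  have hpos : 0 < ∑ i, (δ i - μ * α i) * s i := by
    obtain ⟨p, hp⟩ := Function.ne_iff.mp hv0
    apply Finset.sum_pos'
    · intro i _
      exact mul_nonneg (by linarith [hμδ i]) (hsnn i)
    · refine ⟨p.1, Finset.mem_univ _, ?_⟩
      apply mul_pos (by linarith [hμδ p.1])
      have hvp : v p ≠ 0 := by simpa using hp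
      have hple : (subv v p.1) p.2 ^ 2 ≤ s p.1 :=
        Finset.single_le_sum (f := fun a => (subv v p.1) a ^ 2)
          (fun a _ => sq_nonneg _) (Finset.mem_univ p.2)
      have hvv : (subv v p.1) p.2 = v p := by
        show v ⟨p.1, p.2⟩ = v p
        congr
      have hsq : 0 < (v p) ^ 2 :=
        lt_of_le_of_ne (sq_nonneg _) (Ne.symm (pow_ne_zero 2 hvp))
      rw [hvv] at hple
      linarith
  have hquad : 0 < v ⬝ᵥ M *ᵥ v := by
    calc (0 : ℝ) < ∑ i, (δ i - μ * α i) * s i := hpos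
      _ = ∑ i, ((minEig (blk Q i i) - μ * α i) * s i - (W i * s i + R i) / 2) := hfinal.symm
      _ ≤ v ⬝ᵥ M *ᵥ v := hmain
  rw [hv, dotProduct_zero] at hquad
  exact lt_irrefl 0 hquad
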